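/- Let q be a prime power, let μ = [μ_1 ≥ … ≥ μ_r] be a partition of n, and let 0 ≤ k ≤ n. Then Σ_{ν} V(μ,ν) = Σ_{ν} V(μ′,ν) + Σ_{ν′} ( V(μ′,ν′) − q^{μ_r−1}·V(μ″,ν′) + (q^{μ_r−1} − 1)·V(μ‴,ν′) ), where ν ranges over all weakly decreasing sequences of r nonnegative integers summing to k, ν′ ranges over all weakly decreasing sequences of r nonnegative integers summing to k−1, and any summand whose partition argument is undefined is omitted (treated as 0). -/

import Mathlib

open scoped Classical

/-- The q-binomial coefficient `binom(m,k)_q = ∏_{i=1}^{k} (q^{m−k+i} − 1)/(q^i − 1)`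
for `0 ≤ k ≤ m`, and `0` otherwise. -/
noncomputable def qbinom (q : ℚ) (m k : ℤ) : ℚ :=
  if 0 ≤ k ∧ k ≤ m then
    ∏ i ∈ Finset.Icc 1 k.toNat, (q ^ (m - k + (i : ℤ)).toNat - 1) / (q ^ i - 1)
  else 0

/-- `V(μ,ν) = ∏_{j=1}^{r} binom(μ_j − ν_{j+1}, ν_j − ν_{j+1})_q · q^{ν_{j+1}(μ_j − ν_j)}`,
defined to be `0` if some entry `μ_j` or `ν_j` (for `1 ≤ j ≤ r`) is negative. -/
noncomputable def Vq (q : ℚ) (r : ℕ) (μ ν : ℕ → ℤ) : ℚ :=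
  if ∀ j ∈ Finset.Icc 1 r, 0 ≤ μ j ∧ 0 ≤ ν j then
    ∏ j ∈ Finset.Icc 1 r,
      qbinom q (μ j - ν (j + 1)) (ν j - ν (j + 1)) * q ^ (ν (j + 1) * (μ j - ν j))
  else 0

section qext
noncomputable def qfact (q : ℚ) (n : ℕ) : ℚ := ∏ i ∈ Finset.Icc 1 n, (q ^ i - 1)

section qlemmas
variable {q : ℚ}

lemma qpow_sub_one_ne (hq : 1 < q) (i : ℕ) (hi : 1 ≤ i) : q ^ i - 1 ≠ 0 := by
  have : (1:ℚ) < q ^ i := one_lt_pow₀ hq (by omega)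
  linarith

lemma qfact_ne_zero (hq : 1 < q) (n : ℕ) : qfact q n ≠ 0 := by
  refine Finset.prod_ne_zero_iff.2 fun i hi => ?_
  exact qpow_sub_one_ne hq i (Finset.mem_Icc.1 hi).1

lemma qfact_succ (n : ℕ) : qfact q (n + 1) = qfact q n * (q ^ (n+1) - 1) := by
  unfold qfact
  rw [← Finset.Ico_add_one_right_eq_Icc, Finset.prod_Ico_succ_top (by omega), Finset.Ico_add_one_right_eq_Icc]

lemma qfact_zero : qfact q 0 = 1 := by simp [qfact]

lemma qbinom_of_neg {m k : ℤ} (h : ¬ (0 ≤ k ∧ k ≤ m)) : qbinom q m k = 0 := if_neg h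

lemma qbinom_zero_right {m : ℤ} (hm : 0 ≤ m) : qbinom q m 0 = 1 := by
  simp [qbinom, hm]

lemma qfact_split (D K : ℕ) :
    qfact q (D + K) = qfact q D * ∏ i ∈ Finset.Icc 1 K, (q ^ (D + i) - 1) := by
  have e1 : ∀ n : ℕ, Finset.Icc 1 n = Finset.Ioc 0 n := fun n => by
    rw [← Finset.Icc_add_one_left_eq_Ioc]; rfl
  have e2 : ∏ i ∈ Finset.Icc 1 K, (q ^ (D + i) - 1)
      = ∏ i ∈ Finset.Ioc D (D + K), (q ^ i - 1) := by
    have : Finset.Ioc D (D + K) = (Finset.Ioc 0 K).map (addLeftEmbedding D) := by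
      simp [Finset.map_add_left_Ioc]
    rw [this, Finset.prod_map, e1]
    simp [addLeftEmbedding]
  rw [e2]
  unfold qfact
  rw [e1, e1, ← Finset.prod_Ioc_consecutive _ (Nat.zero_le D) (Nat.le_add_right D K)]

lemma qbinom_eq_qfact (hq : 1 < q) {m k : ℤ} (hk : 0 ≤ k) (hkm : k ≤ m) :
    qbinom q m k = qfact q m.toNat / (qfact q k.toNat * qfact q (m - k).toNat) := by
  rw [qbinom, if_pos ⟨hk, hkm⟩]
  set K := k.toNat with hK
  set D := (m - k).toNat with hD
  have hmk : ∀ i ∈ Finset.Icc 1 K, (m - k + (i:ℤ)).toNat = D + i := by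
    intro i hi; omega
  have h1 : ∏ i ∈ Finset.Icc 1 K, (q ^ (m - k + (i:ℤ)).toNat - 1) / (q ^ i - 1)
      = (∏ i ∈ Finset.Icc 1 K, (q ^ (D + i) - 1)) / (∏ i ∈ Finset.Icc 1 K, (q ^ i - 1)) := by
    rw [← Finset.prod_div_distrib]
    exact Finset.prod_congr rfl fun i hi => by rw [hmk i hi]
  have hm' : m.toNat = D + K := by omega
  rw [h1, hm', qfact_split D K,
    show (∏ i ∈ Finset.Icc 1 K, (q ^ i - 1)) = qfact q K from rfl]
  have hD0 := qfact_ne_zero hq D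
  have hK0 := qfact_ne_zero hq K
  have hP : (∏ i ∈ Finset.Icc 1 K, (q ^ (D + i) - 1)) ≠ 0 :=
    Finset.prod_ne_zero_iff.2 fun i hi => qpow_sub_one_ne hq _ (by have := (Finset.mem_Icc.1 hi).1; omega)
  field_simp

lemma qbinom_self (hq : 1 < q) {m : ℤ} (hm : 0 ≤ m) : qbinom q m m = 1 := by
  rw [qbinom_eq_qfact hq hm le_rfl]
  simp [qfact_zero]
  exact qfact_ne_zero hq _


lemma qbinom_pascal (hq : 1 < q) {m k : ℤ} (h : 1 ≤ m ∨ k ≠ 0) :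
    qbinom q m k = qbinom q (m-1) k + q ^ (m - k) * qbinom q (m-1) (k-1) := by
  have hq0 : q ≠ 0 := by positivity
  by_cases hk0 : 0 ≤ k
  · by_cases hkm : k ≤ m
    · by_cases hkz : k = 0
      · subst hkz
        have hm1 : 1 ≤ m := h.resolve_right (by simp)
        rw [qbinom_zero_right (by omega), qbinom_zero_right (by omega),
          qbinom_of_neg (by omega)]
        ring
      · by_cases hkm' : k = m
        · subst hkm'
          rw [qbinom_self hq hk0, qbinom_of_neg (by omega), qbinom_self hq (by omega)]
          simp
        · -- 1 ≤ k ≤ m - 1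
          obtain ⟨K, hKk⟩ : ∃ K : ℕ, k = (K:ℤ) := ⟨k.toNat, by omega⟩
          obtain ⟨D, hDd⟩ : ∃ D : ℕ, m - k = (D:ℤ) := ⟨(m-k).toNat, by omega⟩
          have hK1 : 1 ≤ K := by omega
          have hD1 : 1 ≤ D := by omega
          rw [qbinom_eq_qfact hq hk0 hkm, qbinom_eq_qfact hq hk0 (by omega),
            qbinom_eq_qfact hq (by omega) (by omega)]
          rw [show m.toNat = D + K by omega, show k.toNat = K by omega,
            show (m-k).toNat = D by omega, show (m-1).toNat = D + K - 1 by omega,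
            show (m-1-k).toNat = D - 1 by omega, show (m-1-(k-1)).toNat = D by omega,
            show (k-1).toNat = K - 1 by omega]
          rw [show m - k = (D:ℤ) from hDd, zpow_natCast]
          rw [show D + K - 1 = (D-1) + K by omega]
          rw [show D + K = ((D-1) + K) + 1 by omega, qfact_succ,
            show (D-1)+K+1 = D + K by omega]
          rw [show K = (K-1)+1 by omega, qfact_succ, show (K-1)+1 = K by omega]
          rw [show D = (D-1)+1 by omega, qfact_succ, show (D-1)+1 = D by omega]
          have h1 := qfact_ne_zero hq (D-1)
          have h2 := qfact_ne_zero hq (K-1)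
          have h3 := qfact_ne_zero hq ((D-1)+K)
          have h4 := qpow_sub_one_ne hq K hK1
          have h5 := qpow_sub_one_ne hq D hD1
          have hpow : q ^ (D + K) = q ^ D * q ^ K := by rw [pow_add]
          field_simp
          rw [hpow]
          ring
    · rw [qbinom_of_neg (by omega), qbinom_of_neg (by omega), qbinom_of_neg (by omega)]
      ring
  · rw [qbinom_of_neg (by omega), qbinom_of_neg (by omega), qbinom_of_neg (by omega)]
    ring

lemma qbinom_absorb (hq : 1 < q) {m k : ℤ} (hm : 0 ≤ m) :
    (q ^ (m - k) - 1) * qbinom q m k = (q ^ m - 1) * qbinom q (m - 1) k := by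
  have hq0 : q ≠ 0 := by positivity
  by_cases hk0 : 0 ≤ k
  · by_cases hkm : k ≤ m - 1
    · obtain ⟨K, hKk⟩ : ∃ K : ℕ, k = (K:ℤ) := ⟨k.toNat, by omega⟩
      obtain ⟨D, hDd⟩ : ∃ D : ℕ, m - k = (D:ℤ) := ⟨(m-k).toNat, by omega⟩
      have hD1 : 1 ≤ D := by omega
      rw [qbinom_eq_qfact hq hk0 (by omega), qbinom_eq_qfact hq hk0 hkm]
      rw [show m.toNat = D + K by omega, show k.toNat = K by omega,
        show (m-k).toNat = D by omega, show (m-1).toNat = D + K - 1 by omega,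
        show (m-1-k).toNat = D - 1 by omega]
      rw [show m - k = (D:ℤ) from hDd, zpow_natCast,
        show m = ((D+K:ℕ):ℤ) by push_cast; omega, zpow_natCast]
      rw [show D + K - 1 = (D-1)+K by omega]
      rw [show D + K = ((D-1) + K) + 1 by omega, qfact_succ,
        show (D-1)+K+1 = D + K by omega]
      rw [show D = (D-1)+1 by omega, qfact_succ, show (D-1)+1 = D by omega]
      have h1 := qfact_ne_zero hq (D-1)
      have h2 := qfact_ne_zero hq K
      have h3 := qfact_ne_zero hq ((D-1)+K)
      have h5 := qpow_sub_one_ne hq D hD1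
      field_simp
    · by_cases hkm' : k = m
      · subst hkm'
        rw [show qbinom q (k - 1) k = 0 from qbinom_of_neg (by omega),
          sub_self, zpow_zero, sub_self, zero_mul, mul_zero]
      · rw [qbinom_of_neg (by omega), qbinom_of_neg (by omega)]
        ring
  · rw [qbinom_of_neg (by omega), qbinom_of_neg (by omega)]
    ring

lemma key_identity (hq : 1 < q) {A Mr x y : ℤ} (hMr : 1 ≤ Mr) (hA : Mr ≤ A)
    (hxy : y ≤ x) (hy : 1 ≤ y) :
    qbinom q (A - y) (x - y) * q ^ (y * (A - x)) * qbinom q Mr y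
      = qbinom q (A - y) (x - y) * q ^ (y * (A - x)) * qbinom q (Mr - 1) y
        + (qbinom q (A - y + 1) (x - y + 1) * q ^ ((y - 1) * (A - x)) * qbinom q (Mr - 1) (y - 1)
          - q ^ (Mr - 1) * (qbinom q (A - y) (x - y + 1) * q ^ ((y - 1) * (A - 1 - x)) *
              qbinom q (Mr - 1) (y - 1))
          + (q ^ (Mr - 1) - 1) * (qbinom q (A - y + 1) (x - y + 1) * q ^ ((y - 1) * (A - x)) *
              qbinom q (Mr - 2) (y - 1))) := by
  have hq0 : q ≠ 0 := by positivity
  have h1 := qbinom_pascal hq (m := Mr) (k := y) (Or.inl hMr)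
  have h2 := qbinom_pascal hq (m := A - y + 1) (k := x - y + 1) (Or.inr (by omega))
  rw [show A - y + 1 - 1 = A - y by ring, show x - y + 1 - 1 = x - y by ring,
    show A - y + 1 - (x - y + 1) = A - x by ring] at h2
  have h3 := qbinom_absorb hq (m := Mr - 1) (k := y - 1) (by omega)
  rw [show Mr - 1 - (y - 1) = Mr - y by ring, show Mr - 1 - 1 = Mr - 2 by ring] at h3
  -- power rewrites
  rw [show y * (A - x) = (y - 1) * (A - x) + (A - x) by ring, zpow_add₀ hq0]
  rw [show (y - 1) * (A - 1 - x) = (y - 1) * (A - x) - (y - 1) by ring]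
  set a := qbinom q (A - y) (x - y)
  set b := qbinom q (A - y) (x - y + 1)
  set c := qbinom q (Mr - 1) y
  set d := qbinom q (Mr - 1) (y - 1)
  set e := qbinom q (Mr - 2) (y - 1)
  set u := q ^ (A - x)
  set w := q ^ ((y - 1) * (A - x))
  set v := q ^ (y - 1)
  set s := q ^ (Mr - 1)
  set t := q ^ (Mr - y)
  have hv : v ≠ 0 := zpow_ne_zero _ hq0
  have hts : t * v = s := by
    rw [show s = q ^ ((Mr - y) + (y - 1)) by rw [show (Mr - y) + (y-1) = Mr - 1 by ring],
      zpow_add₀ hq0]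
  have hpv : q ^ ((y - 1) * (A - x) - (y - 1)) * v = w := by
    rw [show w = q ^ (((y-1)*(A-x) - (y-1)) + (y - 1)) by rw [show ((y-1)*(A-x) - (y-1)) + (y-1) = (y-1)*(A-x) by ring],
      zpow_add₀ hq0]
  set p := q ^ ((y - 1) * (A - x) - (y - 1))
  rw [h1, h2]
  linear_combination ((b + u * a) * w) * h3 - (b * p * d) * hts + (t * b * d) * hpv

lemma key_identity_r1 (hq : 1 < q) {Mr y : ℤ} (hMr : 1 ≤ Mr) (hy : 1 ≤ y) :
    qbinom q Mr y = qbinom q (Mr - 1) y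
      + (qbinom q (Mr - 1) (y - 1)
        + (q ^ (Mr - 1) - 1) * qbinom q (Mr - 2) (y - 1)) := by
  have h1 := qbinom_pascal hq (m := Mr) (k := y) (Or.inl hMr)
  have h3 := qbinom_absorb hq (m := Mr - 1) (k := y - 1) (by omega)
  rw [show Mr - 1 - (y - 1) = Mr - y by ring, show Mr - 1 - 1 = Mr - 2 by ring] at h3
  rw [h1]
  linear_combination h3

lemma bracket_vanish (hq : 1 < q) {A Mr y : ℤ} (hMr : 1 ≤ Mr) (hA : Mr ≤ A) (hy : 0 ≤ y) :
    qbinom q (A - y) 0 * q ^ (y * (A - y)) * qbinom q (Mr - 1) y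
      - q ^ (Mr - 1) * (qbinom q (A - 1 - y) 0 * q ^ (y * (A - 1 - y)) * qbinom q (Mr - 1) y)
      + (q ^ (Mr - 1) - 1) * (qbinom q (A - y) 0 * q ^ (y * (A - y)) * qbinom q (Mr - 2) y)
      = 0 := by
  have hq0 : q ≠ 0 := by positivity
  rcases lt_trichotomy y A with hyA | hyA | hyA
  · -- y ≤ A - 1
    rw [qbinom_zero_right (by omega : (0:ℤ) ≤ A - y),
      qbinom_zero_right (by omega : (0:ℤ) ≤ A - 1 - y)]
    have h3 := qbinom_absorb hq (m := Mr - 1) (k := y) (by omega)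
    rw [show Mr - 1 - y = Mr - 1 - y by ring, show Mr - 1 - 1 = Mr - 2 by ring] at h3
    rw [show y * (A - 1 - y) = y * (A - y) - y by ring]
    set c := qbinom q (Mr - 1) y
    set e := qbinom q (Mr - 2) y
    set w := q ^ (y * (A - y))
    set s := q ^ (Mr - 1)
    set t := q ^ (Mr - 1 - y)
    set vy := q ^ (y)
    set g := q ^ (y * (A - y) - y)
    have hts : t * vy = s := by
      rw [show s = q ^ ((Mr - 1 - y) + y) by rw [show (Mr - 1 - y) + y = Mr - 1 by ring],
        zpow_add₀ hq0]
    have hgv : g * vy = w := by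
      rw [show w = q ^ ((y * (A - y) - y) + y) by rw [show (y * (A - y) - y) + y = y * (A - y) by ring],
        zpow_add₀ hq0]
    linear_combination (-w) * h3 - c * t * hgv + c * g * hts
  · -- y = A
    subst hyA
    rw [show qbinom q (y - 1 - y) 0 = 0 from qbinom_of_neg (by omega),
      show qbinom q (Mr - 1) y = 0 from qbinom_of_neg (by omega),
      show qbinom q (Mr - 2) y = 0 from qbinom_of_neg (by omega)]
    ring
  · rw [show qbinom q (A - y) 0 = 0 from qbinom_of_neg (by omega),
      show qbinom q (A - 1 - y) 0 = 0 from qbinom_of_neg (by omega)]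
    ring

end qlemmas

noncomputable def vfac (q : ℚ) (μ ν : ℕ → ℤ) (j : ℕ) : ℚ :=
  qbinom q (μ j - ν (j + 1)) (ν j - ν (j + 1)) * q ^ (ν (j + 1) * (μ j - ν j))

section Vlemmas
variable {q : ℚ}

lemma Icc_split2 (f : ℕ → ℚ) (s : ℕ) :
    ∏ j ∈ Finset.Icc 1 (s+2), f j = (∏ j ∈ Finset.Icc 1 s, f j) * f (s+1) * f (s+2) := by
  have h1 : Finset.Icc 1 (s+2) = insert (s+2) (Finset.Icc 1 (s+1)) := by
    ext x; simp [Finset.mem_Icc]; omega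
  have h2 : Finset.Icc 1 (s+1) = insert (s+1) (Finset.Icc 1 s) := by
    ext x; simp [Finset.mem_Icc]; omega
  rw [h1, Finset.prod_insert (by simp [Finset.mem_Icc]), h2,
    Finset.prod_insert (by simp [Finset.mem_Icc])]
  ring

lemma Vq_one_eq (μ ν : ℕ → ℤ) (hν1 : 0 ≤ ν 1) (hν2 : ν 2 = 0) :
    Vq q 1 μ ν = qbinom q (μ 1) (ν 1) := by
  by_cases hμ : 0 ≤ μ 1
  · rw [Vq, if_pos]
    · rw [show Finset.Icc 1 1 = {1} from rfl, Finset.prod_singleton, hν2]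
      rw [sub_zero, sub_zero, zero_mul, zpow_zero, mul_one]
    · intro j hj
      rw [Finset.mem_Icc] at hj
      have : j = 1 := by omega
      subst this; exact ⟨hμ, hν1⟩
  · rw [Vq, if_neg, qbinom_of_neg (by omega)]
    intro hall
    exact hμ (hall 1 (by simp)).1

lemma Vq_expand (s : ℕ) (μ ν : ℕ → ℤ)
    (hν : ∀ j ∈ Finset.Icc 1 (s+2), 0 ≤ ν j) (hν0 : ν (s+3) = 0)
    (hμ : ∀ j ∈ Finset.Icc 1 (s+2), j ≠ s+2 → 0 ≤ μ j) :
    Vq q (s+2) μ ν = (∏ j ∈ Finset.Icc 1 s, vfac q μ ν j) * vfac q μ ν (s+1)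
      * qbinom q (μ (s+2)) (ν (s+2)) := by
  have hνr : 0 ≤ ν (s+2) := hν _ (Finset.mem_Icc.2 (by omega))
  by_cases hμr : 0 ≤ μ (s+2)
  · rw [Vq, if_pos (fun j hj => ⟨by
      by_cases h : j = s+2
      · subst h; exact hμr
      · exact hμ j hj h, hν j hj⟩)]
    rw [show (∏ j ∈ Finset.Icc 1 (s+2),
        qbinom q (μ j - ν (j + 1)) (ν j - ν (j + 1)) * q ^ (ν (j + 1) * (μ j - ν j)))
      = ∏ j ∈ Finset.Icc 1 (s+2), vfac q μ ν j from rfl, Icc_split2]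
    congr 1
    rw [vfac, show s+2+1 = s+3 from rfl, hν0, sub_zero, sub_zero, zero_mul, zpow_zero, mul_one]
  · rw [Vq, if_neg (fun hall => hμr (hall (s+2) (Finset.mem_Icc.2 (by omega))).1),
      qbinom_of_neg (by omega), mul_zero]

lemma prefix_prod_eq (s : ℕ) (μ' ν' μ ν : ℕ → ℤ)
    (hμ : ∀ j ∈ Finset.Icc 1 s, μ' j = μ j)
    (hν : ∀ j ∈ Finset.Icc 1 (s+1), ν' j = ν j) :
    ∏ j ∈ Finset.Icc 1 s, vfac q μ' ν' j = ∏ j ∈ Finset.Icc 1 s, vfac q μ ν j := by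
  refine Finset.prod_congr rfl fun j hj => ?_
  have hj' := Finset.mem_Icc.1 hj
  rw [vfac, vfac, hμ j hj, hν j (Finset.mem_Icc.2 (by omega)),
    hν (j+1) (Finset.mem_Icc.2 (by omega))]

lemma Vq_pointwise (hq : 1 < q) (s : ℕ) (μ ν : ℕ → ℤ)
    (hμpos : ∀ j ∈ Finset.Icc 1 (s+2), 1 ≤ μ j)
    (hμmono : μ (s+2) ≤ μ (s+1))
    (hν : ∀ j ∈ Finset.Icc 1 (s+2), 0 ≤ ν j)
    (hνmono : ν (s+2) ≤ ν (s+1))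
    (hν0 : ν (s+3) = 0)
    (hy : 1 ≤ ν (s+2)) :
    Vq q (s+2) μ ν = Vq q (s+2) (Function.update μ (s+2) (μ (s+2) - 1)) ν
      + (Vq q (s+2) (Function.update μ (s+2) (μ (s+2) - 1))
            (Function.update ν (s+2) (ν (s+2) - 1))
        - q ^ (μ (s+2) - 1) * Vq q (s+2)
            (fun j => if j = s+2 then μ (s+2) - 1
              else if j = s+2-1 then μ (s+2-1) - 1 else μ j)
            (Function.update ν (s+2) (ν (s+2) - 1))
        + (q ^ (μ (s+2) - 1) - 1) * Vq q (s+2) (Function.update μ (s+2) (μ (s+2) - 2))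
            (Function.update ν (s+2) (ν (s+2) - 1))) := by
  set μ' := Function.update μ (s+2) (μ (s+2) - 1) with hμ'def
  set μ'' := (fun j => if j = s+2 then μ (s+2) - 1
              else if j = s+2-1 then μ (s+2-1) - 1 else μ j) with hμ''def
  set μ''' := Function.update μ (s+2) (μ (s+2) - 2) with hμ'''def
  set νb := Function.update ν (s+2) (ν (s+2) - 1) with hνbdef
  have hνb_ne : ∀ j : ℕ, j ≠ s+2 → νb j = ν j := fun j hj => Function.update_of_ne hj _ _
  have hνb_same : νb (s+2) = ν (s+2) - 1 := Function.update_self _ _ _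
  have hμ'_ne : ∀ j : ℕ, j ≠ s+2 → μ' j = μ j := fun j hj => Function.update_of_ne hj _ _
  have hμ'''_ne : ∀ j : ℕ, j ≠ s+2 → μ''' j = μ j := fun j hj => Function.update_of_ne hj _ _
  have hμ''_mid : μ'' (s+1) = μ (s+1) - 1 := by
    rw [hμ''def]; simp
  have hμ''_last : μ'' (s+2) = μ (s+2) - 1 := by rw [hμ''def]; simp
  have hμ''_pre : ∀ j ∈ Finset.Icc 1 s, μ'' j = μ j := by
    intro j hj
    have hj' := Finset.mem_Icc.1 hj
    rw [hμ''def]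
    simp only [if_neg (by omega : ¬ j = s+2), if_neg (show ¬ j = s+2-1 by omega)]
  have hνb_nonneg : ∀ j ∈ Finset.Icc 1 (s+2), 0 ≤ νb j := by
    intro j hj
    by_cases h : j = s+2
    · subst h; rw [hνb_same]; omega
    · rw [hνb_ne j h]; exact hν j hj
  have hνb0 : νb (s+3) = 0 := by rw [hνb_ne _ (by omega), hν0]
  have hμ'_nn : ∀ j ∈ Finset.Icc 1 (s+2), j ≠ s+2 → 0 ≤ μ' j := by
    intro j hj h; rw [hμ'_ne j h]; have := hμpos j hj; omega
  have hμ''_nn : ∀ j ∈ Finset.Icc 1 (s+2), j ≠ s+2 → 0 ≤ μ'' j := by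
    intro j hj h
    by_cases h1 : j = s+1
    · subst h1; rw [hμ''_mid]
      have := hμpos (s+1) (Finset.mem_Icc.2 (by omega)); omega
    · rw [hμ''_pre j (Finset.mem_Icc.2 (by have := Finset.mem_Icc.1 hj; omega))]
      have := hμpos j hj; omega
  have hμ'''_nn : ∀ j ∈ Finset.Icc 1 (s+2), j ≠ s+2 → 0 ≤ μ''' j := by
    intro j hj h; rw [hμ'''_ne j h]; have := hμpos j hj; omega
  have hμ_nn : ∀ j ∈ Finset.Icc 1 (s+2), j ≠ s+2 → 0 ≤ μ j := by
    intro j hj _; have := hμpos j hj; omega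
  rw [Vq_expand s μ ν hν hν0 hμ_nn, Vq_expand s μ' ν hν hν0 hμ'_nn,
    Vq_expand s μ' νb hνb_nonneg hνb0 hμ'_nn,
    Vq_expand s μ'' νb hνb_nonneg hνb0 hμ''_nn,
    Vq_expand s μ''' νb hνb_nonneg hνb0 hμ'''_nn]
  rw [prefix_prod_eq s μ' ν μ ν (fun j hj => hμ'_ne j (by have := Finset.mem_Icc.1 hj; omega))
      (fun _ _ => rfl),
    prefix_prod_eq s μ' νb μ ν (fun j hj => hμ'_ne j (by have := Finset.mem_Icc.1 hj; omega))
      (fun j hj => hνb_ne j (by have := Finset.mem_Icc.1 hj; omega)),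
    prefix_prod_eq s μ'' νb μ ν hμ''_pre
      (fun j hj => hνb_ne j (by have := Finset.mem_Icc.1 hj; omega)),
    prefix_prod_eq s μ''' νb μ ν (fun j hj => hμ'''_ne j (by have := Finset.mem_Icc.1 hj; omega))
      (fun j hj => hνb_ne j (by have := Finset.mem_Icc.1 hj; omega))]
  -- middle factors
  have emid : ∀ (α β : ℕ → ℤ), vfac q α β (s+1)
      = qbinom q (α (s+1) - β (s+2)) (β (s+1) - β (s+2)) * q ^ (β (s+2) * (α (s+1) - β (s+1))) := by
    intro α β; rw [vfac, show s+1+1 = s+2 by omega]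
  rw [emid μ ν, emid μ' ν, emid μ' νb, emid μ'' νb, emid μ''' νb,
    hμ'_ne (s+1) (by omega), hμ'''_ne (s+1) (by omega), hμ''_mid,
    hνb_ne (s+1) (by omega), hνb_same,
    (show μ' (s+2) = μ (s+2) - 1 from Function.update_self _ _ _),
    (show μ''' (s+2) = μ (s+2) - 2 from Function.update_self _ _ _), hμ''_last]
  -- argument normalizations
  rw [show μ (s+1) - (ν (s+2) - 1) = μ (s+1) - ν (s+2) + 1 by ring,
    show ν (s+1) - (ν (s+2) - 1) = ν (s+1) - ν (s+2) + 1 by ring,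
    show μ (s+1) - 1 - (ν (s+2) - 1) = μ (s+1) - ν (s+2) by ring]
  have hMr : 1 ≤ μ (s+2) := hμpos _ (Finset.mem_Icc.2 (by omega))
  have KI := key_identity hq (A := μ (s+1)) (Mr := μ (s+2)) (x := ν (s+1)) (y := ν (s+2))
    hMr hμmono hνmono hy
  linear_combination (∏ j ∈ Finset.Icc 1 s, vfac q μ ν j) * KI

lemma Vq_pointwise_zero (hq : 1 < q) (s : ℕ) (μ ν : ℕ → ℤ)
    (hμpos : ∀ j ∈ Finset.Icc 1 (s+2), 1 ≤ μ j)
    (hν : ∀ j ∈ Finset.Icc 1 (s+2), 0 ≤ ν j)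
    (hν0 : ν (s+3) = 0)
    (hy : ν (s+2) = 0) :
    Vq q (s+2) μ ν = Vq q (s+2) (Function.update μ (s+2) (μ (s+2) - 1)) ν := by
  set μ' := Function.update μ (s+2) (μ (s+2) - 1) with hμ'def
  have hμ'_ne : ∀ j : ℕ, j ≠ s+2 → μ' j = μ j := fun j hj => Function.update_of_ne hj _ _
  have hμ_nn : ∀ j ∈ Finset.Icc 1 (s+2), j ≠ s+2 → 0 ≤ μ j := by
    intro j hj _; have := hμpos j hj; omega
  have hμ'_nn : ∀ j ∈ Finset.Icc 1 (s+2), j ≠ s+2 → 0 ≤ μ' j := by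
    intro j hj h; rw [hμ'_ne j h]; have := hμpos j hj; omega
  rw [Vq_expand s μ ν hν hν0 hμ_nn, Vq_expand s μ' ν hν hν0 hμ'_nn,
    prefix_prod_eq s μ' ν μ ν (fun j hj => hμ'_ne j (by have := Finset.mem_Icc.1 hj; omega))
      (fun _ _ => rfl)]
  have emid : ∀ (α : ℕ → ℤ), vfac q α ν (s+1)
      = qbinom q (α (s+1) - ν (s+2)) (ν (s+1) - ν (s+2)) * q ^ (ν (s+2) * (α (s+1) - ν (s+1))) := by
    intro α; rw [vfac, show s+1+1 = s+2 by omega]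
  rw [emid μ, emid μ', hμ'_ne (s+1) (by omega),
    (show μ' (s+2) = μ (s+2) - 1 from Function.update_self _ _ _), hy,
    qbinom_zero_right (by have := hμpos (s+2) (Finset.mem_Icc.2 (by omega)); omega),
    qbinom_zero_right (by have := hμpos (s+2) (Finset.mem_Icc.2 (by omega)); omega)]

lemma Vq_bracket_vanish (hq : 1 < q) (s : ℕ) (μ ν' : ℕ → ℤ)
    (hμpos : ∀ j ∈ Finset.Icc 1 (s+2), 1 ≤ μ j)
    (hμmono : μ (s+2) ≤ μ (s+1))
    (hν : ∀ j ∈ Finset.Icc 1 (s+2), 0 ≤ ν' j)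
    (hν0 : ν' (s+3) = 0)
    (hxx : ν' (s+1) = ν' (s+2)) :
    Vq q (s+2) (Function.update μ (s+2) (μ (s+2) - 1)) ν'
      - q ^ (μ (s+2) - 1) * Vq q (s+2)
          (fun j => if j = s+2 then μ (s+2) - 1
            else if j = s+2-1 then μ (s+2-1) - 1 else μ j) ν'
      + (q ^ (μ (s+2) - 1) - 1) * Vq q (s+2) (Function.update μ (s+2) (μ (s+2) - 2)) ν'
      = 0 := by
  set μ' := Function.update μ (s+2) (μ (s+2) - 1) with hμ'def
  set μ'' := (fun j => if j = s+2 then μ (s+2) - 1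
              else if j = s+2-1 then μ (s+2-1) - 1 else μ j) with hμ''def
  set μ''' := Function.update μ (s+2) (μ (s+2) - 2) with hμ'''def
  have hμ'_ne : ∀ j : ℕ, j ≠ s+2 → μ' j = μ j := fun j hj => Function.update_of_ne hj _ _
  have hμ'''_ne : ∀ j : ℕ, j ≠ s+2 → μ''' j = μ j := fun j hj => Function.update_of_ne hj _ _
  have hμ''_mid : μ'' (s+1) = μ (s+1) - 1 := by rw [hμ''def]; simp
  have hμ''_last : μ'' (s+2) = μ (s+2) - 1 := by rw [hμ''def]; simp
  have hμ''_pre : ∀ j ∈ Finset.Icc 1 s, μ'' j = μ j := by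
    intro j hj
    have hj' := Finset.mem_Icc.1 hj
    rw [hμ''def]
    simp only [if_neg (by omega : ¬ j = s+2), if_neg (show ¬ j = s+2-1 by omega)]
  have hμ'_nn : ∀ j ∈ Finset.Icc 1 (s+2), j ≠ s+2 → 0 ≤ μ' j := by
    intro j hj h; rw [hμ'_ne j h]; have := hμpos j hj; omega
  have hμ''_nn : ∀ j ∈ Finset.Icc 1 (s+2), j ≠ s+2 → 0 ≤ μ'' j := by
    intro j hj h
    by_cases h1 : j = s+1
    · subst h1; rw [hμ''_mid]
      have := hμpos (s+1) (Finset.mem_Icc.2 (by omega)); omega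
    · rw [hμ''_pre j (Finset.mem_Icc.2 (by have := Finset.mem_Icc.1 hj; omega))]
      have := hμpos j hj; omega
  have hμ'''_nn : ∀ j ∈ Finset.Icc 1 (s+2), j ≠ s+2 → 0 ≤ μ''' j := by
    intro j hj h; rw [hμ'''_ne j h]; have := hμpos j hj; omega
  rw [Vq_expand s μ' ν' hν hν0 hμ'_nn, Vq_expand s μ'' ν' hν hν0 hμ''_nn,
    Vq_expand s μ''' ν' hν hν0 hμ'''_nn,
    prefix_prod_eq s μ' ν' μ ν' (fun j hj => hμ'_ne j (by have := Finset.mem_Icc.1 hj; omega))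
      (fun _ _ => rfl),
    prefix_prod_eq s μ'' ν' μ ν' hμ''_pre (fun _ _ => rfl),
    prefix_prod_eq s μ''' ν' μ ν' (fun j hj => hμ'''_ne j (by have := Finset.mem_Icc.1 hj; omega))
      (fun _ _ => rfl)]
  have emid : ∀ (α : ℕ → ℤ), vfac q α ν' (s+1)
      = qbinom q (α (s+1) - ν' (s+2)) (ν' (s+1) - ν' (s+2)) * q ^ (ν' (s+2) * (α (s+1) - ν' (s+1))) := by
    intro α; rw [vfac, show s+1+1 = s+2 by omega]
  rw [emid μ', emid μ'', emid μ''', hμ'_ne (s+1) (by omega), hμ'''_ne (s+1) (by omega),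
    hμ''_mid, hμ''_last, (show μ' (s+2) = μ (s+2) - 1 from Function.update_self _ _ _),
    (show μ''' (s+2) = μ (s+2) - 2 from Function.update_self _ _ _), hxx, sub_self]
  have hMr : 1 ≤ μ (s+2) := hμpos _ (Finset.mem_Icc.2 (by omega))
  have hy0 : 0 ≤ ν' (s+2) := hν _ (Finset.mem_Icc.2 (by omega))
  have BV := bracket_vanish hq (A := μ (s+1)) (Mr := μ (s+2)) (y := ν' (s+2)) hMr hμmono hy0
  linear_combination (∏ j ∈ Finset.Icc 1 s, vfac q μ ν' j) * BV

end Vlemmas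

end qext

/-- The set of weakly decreasing sequences `ν_1 ≥ … ≥ ν_r ≥ 0` of nonnegative integers
summing to `k` (encoded as functions `ℕ → ℤ` vanishing outside `[1, r]`). -/
def nuSet (r : ℕ) (k : ℤ) : Set (ℕ → ℤ) :=
  {ν | (∀ j : ℕ, ν j ≠ 0 → j ∈ Finset.Icc 1 r)
    ∧ (∀ j ∈ Finset.Icc 1 r, 0 ≤ ν j)
    ∧ (∀ i j : ℕ, 1 ≤ i → i ≤ j → j ≤ r → ν j ≤ ν i)
    ∧ ∑ j ∈ Finset.Icc 1 r, ν j = k}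

lemma nuSet_neg (r : ℕ) (k : ℤ) (hk : k < 0) : nuSet r k = ∅ := by
  ext ν
  simp only [nuSet, Set.mem_setOf_eq, Set.mem_empty_iff_false, iff_false]
  rintro ⟨h1, h2, h3, h4⟩
  have : 0 ≤ ∑ j ∈ Finset.Icc 1 r, ν j := Finset.sum_nonneg h2
  omega

lemma nuSet_finite (r : ℕ) (k : ℤ) : (nuSet r k).Finite := by
  rcases lt_or_ge k 0 with hk | hk
  · rw [nuSet_neg r k hk]; exact Set.finite_empty
  · classical
    have hsub : nuSet r k ⊆ Set.range
        (fun (g : (Finset.Icc 1 r : Finset ℕ) → (Finset.Icc (0:ℤ) k : Finset ℤ)) =>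
          (fun j => if h : j ∈ Finset.Icc 1 r then ((g ⟨j, h⟩ : ℤ)) else 0)) := by
      rintro ν ⟨h1, h2, h3, h4⟩
      refine ⟨fun j => ⟨ν j, Finset.mem_Icc.2 ⟨h2 j j.2, ?_⟩⟩, ?_⟩
      · calc ν (j:ℕ) ≤ ∑ i ∈ Finset.Icc 1 r, ν i :=
              Finset.single_le_sum (fun i hi => h2 i hi) j.2
          _ = k := h4
      · funext j
        by_cases hj : j ∈ Finset.Icc 1 r
        · simp [hj]
        · simp only [dif_neg hj]
          by_contra h
          exact hj (h1 j (fun hz => h hz.symm))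
    exact Set.Finite.subset (Set.finite_range _) hsub

lemma nuSet_one (k : ℤ) (hk : 0 ≤ k) :
    nuSet 1 k = {fun j => if j = 1 then k else 0} := by
  ext ν
  constructor
  · rintro ⟨h1, h2, h3, h4⟩
    have hIcc : Finset.Icc 1 1 = {1} := rfl
    rw [hIcc, Finset.sum_singleton] at h4
    refine Set.mem_singleton_iff.2 (funext fun j => ?_)
    by_cases hj : j = 1
    · subst hj; simp [h4]
    · simp only [if_neg hj]
      by_contra h
      have := h1 j h
      rw [Finset.mem_Icc] at this
      omega
  · rintro rfl
    refine ⟨fun j hj => ?_, fun j hj => ?_, fun i j hi hij hj => ?_, ?_⟩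
    · by_cases h : j = 1
      · subst h; exact Finset.mem_Icc.2 (by omega)
      · simp only [if_neg h, ne_eq, not_true_eq_false] at hj
    · rw [Finset.mem_Icc] at hj
      have : j = 1 := by omega
      subst this; simpa using hk
    · have : i = 1 ∧ j = 1 := by omega
      obtain ⟨rfl, rfl⟩ := this; exact le_rfl
    · rw [show Finset.Icc 1 1 = {1} from rfl, Finset.sum_singleton]; simp

lemma bar_mem (s : ℕ) (k : ℤ) (ν : ℕ → ℤ) (hν : ν ∈ nuSet (s+2) k) (h1 : 1 ≤ ν (s+2)) :
    Function.update ν (s+2) (ν (s+2) - 1) ∈ nuSet (s+2) (k-1) := by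
  obtain ⟨hs, hnn, hmono, hsum⟩ := hν
  have hmem : (s+2) ∈ Finset.Icc 1 (s+2) := Finset.mem_Icc.2 (by omega)
  refine ⟨fun j hj => ?_, fun j hj => ?_, fun i j hi hij hj => ?_, ?_⟩
  · by_cases h : j = s+2
    · subst h; exact hmem
    · rw [Function.update_of_ne h] at hj; exact hs j hj
  · by_cases h : j = s+2
    · subst h; rw [Function.update_self]; omega
    · rw [Function.update_of_ne h]; exact hnn j hj
  · by_cases hj2 : j = s+2
    · subst hj2
      rw [Function.update_self]
      by_cases hi2 : i = s+2
      · subst hi2; rw [Function.update_self]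
      · rw [Function.update_of_ne hi2]
        have := hmono i (s+2) hi (by omega) (by omega)
        omega
    · rw [Function.update_of_ne hj2]
      have hi2 : i ≠ s+2 := by omega
      rw [Function.update_of_ne hi2]
      exact hmono i j hi hij (by omega)
  · rw [Finset.sum_update_of_mem hmem]
    rw [Finset.sum_eq_sum_sdiff_singleton_add hmem] at hsum
    omega

lemma unbar_mem (s : ℕ) (k : ℤ) (ν' : ℕ → ℤ) (hν' : ν' ∈ nuSet (s+2) (k-1))
    (h1 : ν' (s+2) < ν' (s+1)) :
    Function.update ν' (s+2) (ν' (s+2) + 1) ∈ nuSet (s+2) k := by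
  obtain ⟨hs, hnn, hmono, hsum⟩ := hν'
  have hmem : (s+2) ∈ Finset.Icc 1 (s+2) := Finset.mem_Icc.2 (by omega)
  refine ⟨fun j hj => ?_, fun j hj => ?_, fun i j hi hij hj => ?_, ?_⟩
  · by_cases h : j = s+2
    · subst h; exact hmem
    · rw [Function.update_of_ne h] at hj; exact hs j hj
  · by_cases h : j = s+2
    · subst h; rw [Function.update_self]
      have := hnn (s+2) hmem; omega
    · rw [Function.update_of_ne h]; exact hnn j hj
  · by_cases hj2 : j = s+2
    · subst hj2
      rw [Function.update_self]
      by_cases hi2 : i = s+2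
      · subst hi2; rw [Function.update_self]
      · rw [Function.update_of_ne hi2]
        have := hmono i (s+1) hi (by omega) (by omega)
        omega
    · rw [Function.update_of_ne hj2]
      have hi2 : i ≠ s+2 := by omega
      rw [Function.update_of_ne hi2]
      exact hmono i j hi hij (by omega)
  · rw [Finset.sum_update_of_mem hmem]
    rw [Finset.sum_eq_sum_sdiff_singleton_add hmem] at hsum
    omega

/-- summing the recursion over all filtration types:
`Σ_ν V(μ,ν) = Σ_ν V(μ′,ν) + Σ_{ν′} (V(μ′,ν′) − q^{μ_r−1} V(μ″,ν′) + (q^{μ_r−1}−1) V(μ‴,ν′))`,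
where `ν` runs over weakly decreasing sequences of `r` nonnegative integers summing to `k`
and `ν′` over those summing to `k − 1`; undefined summands are treated as `0`. -/
theorem Vq_sum_recursion
    (q r n k : ℕ) (hq : ∃ p m : ℕ, Nat.Prime p ∧ 0 < m ∧ q = p ^ m) (hr : 1 ≤ r)
    (hk : k ≤ n)
    (μ : ℕ → ℤ)
    (hμmono : ∀ i j : ℕ, 1 ≤ i → i ≤ j → j ≤ r → μ j ≤ μ i) (hμr : 1 ≤ μ r)
    (hμsum : ∑ j ∈ Finset.Icc 1 r, μ j = n) :
    (∑ᶠ ν ∈ nuSet r (k : ℤ), Vq (q : ℚ) r μ ν)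
      = (∑ᶠ ν ∈ nuSet r (k : ℤ), Vq (q : ℚ) r (Function.update μ r (μ r - 1)) ν)
        + ∑ᶠ ν' ∈ nuSet r ((k : ℤ) - 1),
            (Vq (q : ℚ) r (Function.update μ r (μ r - 1)) ν'
              - (q : ℚ) ^ (μ r - 1)
                  * (if 2 ≤ r then
                      Vq (q : ℚ) r
                        (fun j => if j = r then μ r - 1
                          else if j = r - 1 then μ (r - 1) - 1 else μ j) ν'
                    else 0)
              + ((q : ℚ) ^ (μ r - 1) - 1)
                  * Vq (q : ℚ) r (Function.update μ r (μ r - 2)) ν') := by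
  have hq2 : 2 ≤ q := by
    obtain ⟨p, m, hp, hm, rfl⟩ := hq
    calc 2 ≤ p := hp.two_le
      _ ≤ p ^ m := Nat.le_self_pow (by omega) p
  have hq1 : (1:ℚ) < (q:ℚ) := by exact_mod_cast hq2
  have hcase : r = 1 ∨ ∃ s, r = s + 2 := by
    rcases Nat.lt_or_ge r 2 with h | h
    · left; omega
    · right; exact ⟨r - 2, by omega⟩
  rcases hcase with rfl | ⟨s, rfl⟩
  · -- r = 1
    have hif : ¬ (2 ≤ 1) := by omega
    have hknn : (0:ℤ) ≤ (k:ℤ) := by positivity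
    rw [nuSet_one (k:ℤ) hknn, finsum_mem_singleton, finsum_mem_singleton]
    have hV : ∀ α : ℕ → ℤ, Vq (q:ℚ) 1 α (fun j => if j = 1 then (k:ℤ) else 0)
        = qbinom (q:ℚ) (α 1) (k:ℤ) := by
      intro α
      rw [Vq_one_eq α _ (by simp [hknn]) (by simp)]
      simp
    rcases Nat.eq_zero_or_pos k with rfl | hk1
    · rw [show ((0:ℕ):ℤ) - 1 = -1 by norm_num, nuSet_neg 1 (-1) (by norm_num),
        finsum_mem_empty, hV, hV, Function.update_self]
      rw [show ((0:ℕ):ℤ) = 0 by norm_num, qbinom_zero_right (by omega),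
        qbinom_zero_right (by omega)]
      norm_num
    · rw [show (k:ℤ) - 1 = ((k-1:ℕ):ℤ) by push_cast; omega,
        nuSet_one ((k-1:ℕ):ℤ) (by positivity), finsum_mem_singleton]
      have hV' : ∀ α : ℕ → ℤ, Vq (q:ℚ) 1 α (fun j => if j = 1 then ((k-1:ℕ):ℤ) else 0)
          = qbinom (q:ℚ) (α 1) ((k-1:ℕ):ℤ) := by
        intro α
        rw [Vq_one_eq α _ (by simp) (by simp)]
        simp
      rw [hV, hV, hV', hV', hV', if_neg hif, Function.update_self, Function.update_self,
        show ((k-1:ℕ):ℤ) = (k:ℤ) - 1 by push_cast; omega]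
      have KI := key_identity_r1 hq1 (Mr := μ 1) (y := (k:ℤ)) hμr (by exact_mod_cast hk1)
      linear_combination KI
  · -- r = s + 2
    have h22 : 2 ≤ s + 2 := by omega
    have hμpos : ∀ j ∈ Finset.Icc 1 (s+2), 1 ≤ μ j := by
      intro j hj
      have hj' := Finset.mem_Icc.1 hj
      have := hμmono j (s+2) (by omega) (by omega) (by omega)
      omega
    have hμm : μ (s+2) ≤ μ (s+1) := hμmono (s+1) (s+2) (by omega) (by omega) (by omega)
    have hfin1 := nuSet_finite (s+2) (k:ℤ)
    have hfin2 := nuSet_finite (s+2) ((k:ℤ) - 1)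
    rw [finsum_mem_eq_finite_toFinset_sum _ hfin1, finsum_mem_eq_finite_toFinset_sum _ hfin1,
      finsum_mem_eq_finite_toFinset_sum _ hfin2]
    have key : ∑ ν ∈ hfin1.toFinset,
          (Vq (q:ℚ) (s+2) μ ν - Vq (q:ℚ) (s+2) (Function.update μ (s+2) (μ (s+2) - 1)) ν)
        = ∑ ν' ∈ hfin2.toFinset,
            (Vq (q : ℚ) (s+2) (Function.update μ (s+2) (μ (s+2) - 1)) ν'
              - (q : ℚ) ^ (μ (s+2) - 1)
                  * (if 2 ≤ s+2 then
                      Vq (q : ℚ) (s+2)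
                        (fun j => if j = s+2 then μ (s+2) - 1
                          else if j = s+2 - 1 then μ (s+2 - 1) - 1 else μ j) ν'
                    else 0)
              + ((q : ℚ) ^ (μ (s+2) - 1) - 1)
                  * Vq (q : ℚ) (s+2) (Function.update μ (s+2) (μ (s+2) - 2)) ν') := by
      have step1 : ∀ ν ∈ hfin1.toFinset,
          (Vq (q:ℚ) (s+2) μ ν - Vq (q:ℚ) (s+2) (Function.update μ (s+2) (μ (s+2) - 1)) ν)
          = (if 1 ≤ ν (s+2) then
              (Vq (q : ℚ) (s+2) (Function.update μ (s+2) (μ (s+2) - 1))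
                  (Function.update ν (s+2) (ν (s+2) - 1))
                - (q : ℚ) ^ (μ (s+2) - 1)
                    * (if 2 ≤ s+2 then
                        Vq (q : ℚ) (s+2)
                          (fun j => if j = s+2 then μ (s+2) - 1
                            else if j = s+2 - 1 then μ (s+2 - 1) - 1 else μ j)
                          (Function.update ν (s+2) (ν (s+2) - 1))
                      else 0)
                + ((q : ℚ) ^ (μ (s+2) - 1) - 1)
                    * Vq (q : ℚ) (s+2) (Function.update μ (s+2) (μ (s+2) - 2))
                        (Function.update ν (s+2) (ν (s+2) - 1)))
            else 0) := by
        intro ν hν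
        obtain ⟨hs1, hnn, hmono', hsum⟩ := (Set.Finite.mem_toFinset hfin1).1 hν
        have hν0 : ν (s+3) = 0 := by
          by_contra h
          have := Finset.mem_Icc.1 (hs1 _ h)
          omega
        have hνm : ν (s+2) ≤ ν (s+1) := hmono' (s+1) (s+2) (by omega) (by omega) (by omega)
        by_cases hyr : 1 ≤ ν (s+2)
        · rw [if_pos hyr, if_pos h22]
          linear_combination Vq_pointwise hq1 s μ ν hμpos hμm hnn hνm hν0 hyr
        · rw [if_neg hyr, sub_eq_zero]
          exact Vq_pointwise_zero hq1 s μ ν hμpos hnn hν0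
            (by have := hnn (s+2) (Finset.mem_Icc.2 (by omega)); omega)
      rw [Finset.sum_congr rfl step1, ← Finset.sum_filter]
      calc _ = ∑ ν' ∈ hfin2.toFinset.filter (fun ν' => ν' (s+2) < ν' (s+1)),
            (Vq (q : ℚ) (s+2) (Function.update μ (s+2) (μ (s+2) - 1)) ν'
              - (q : ℚ) ^ (μ (s+2) - 1)
                  * (if 2 ≤ s+2 then
                      Vq (q : ℚ) (s+2)
                        (fun j => if j = s+2 then μ (s+2) - 1
                          else if j = s+2 - 1 then μ (s+2 - 1) - 1 else μ j) ν'
                    else 0)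
              + ((q : ℚ) ^ (μ (s+2) - 1) - 1)
                  * Vq (q : ℚ) (s+2) (Function.update μ (s+2) (μ (s+2) - 2)) ν') := by
            refine Finset.sum_nbij'
              (i := fun ν => Function.update ν (s+2) (ν (s+2) - 1))
              (j := fun ν' => Function.update ν' (s+2) (ν' (s+2) + 1))
              ?_ ?_ ?_ ?_ ?_
            · intro a ha
              obtain ⟨haF, hay⟩ := Finset.mem_filter.1 ha
              have haS := (Set.Finite.mem_toFinset hfin1).1 haF
              refine Finset.mem_filter.2
                ⟨(Set.Finite.mem_toFinset hfin2).2 (bar_mem s _ a haS hay), ?_⟩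
              simp only [Function.update_self,
                Function.update_of_ne (show s+1 ≠ s+2 by omega)]
              have := haS.2.2.1 (s+1) (s+2) (by omega) (by omega) (by omega)
              omega
            · intro b hb
              obtain ⟨hbF, hbo⟩ := Finset.mem_filter.1 hb
              have hbS := (Set.Finite.mem_toFinset hfin2).1 hbF
              refine Finset.mem_filter.2
                ⟨(Set.Finite.mem_toFinset hfin1).2 ?_, ?_⟩
              · have := unbar_mem s (k:ℤ) b hbS hbo
                exact this
              · simp only [Function.update_self]
                have := hbS.2.1 (s+2) (Finset.mem_Icc.2 (by omega))
                omega
            · intro a ha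
              simp only [Function.update_self, Function.update_idem,
                show a (s+2) - 1 + 1 = a (s+2) by ring, Function.update_eq_self]
            · intro b hb
              simp only [Function.update_self, Function.update_idem,
                show b (s+2) + 1 - 1 = b (s+2) by ring, Function.update_eq_self]
            · intro a ha
              rfl
        _ = _ := by
            refine Finset.sum_filter_of_ne ?_
            intro ν' hb hne
            by_contra h
            have hbS := (Set.Finite.mem_toFinset hfin2).1 hb
            have hν0' : ν' (s+3) = 0 := by
              by_contra h3
              have := Finset.mem_Icc.1 (hbS.1 _ h3)
              omega
            have hνm' : ν' (s+2) ≤ ν' (s+1) :=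
              hbS.2.2.1 (s+1) (s+2) (by omega) (by omega) (by omega)
            have hxx : ν' (s+1) = ν' (s+2) := by omega
            refine hne ?_
            rw [if_pos h22]
            linear_combination Vq_bracket_vanish hq1 s μ ν' hμpos hμm hbS.2.1 hν0' hxx
    have hsplit := Finset.sum_sub_distrib (s := hfin1.toFinset)
      (f := fun ν => Vq (q:ℚ) (s+2) μ ν)
      (g := fun ν => Vq (q:ℚ) (s+2) (Function.update μ (s+2) (μ (s+2) - 1)) ν)
    linear_combination key - hsplit
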